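/- Let τ_m > 0, set h = π/τ_m, and let z be a complex number with Re(z) > 0. Then (1/√π)·∫_0^{∞} ( ∑_{k∈ℤ} exp(−(τ + 2kτ_m)²/4) )·exp(−zτ) dτ = (h·z/π)·( 1/z² + 2·∑_{n=1}^{∞} exp(−n²h²)/(n²h² + z²) ), where the series converges absolutely. -/

import Mathlib

open Real MeasureTheory Filter Topology Complex

lemma aux_integrableOn_cexp {w : ℂ} (hw : w.re < 0) :
    IntegrableOn (fun τ : ℝ => Complex.exp (w * τ)) (Set.Ioi (0:ℝ)) := by
  refine (exp_neg_integrableOn_Ioi 0 (neg_pos.mpr hw)).mono' ?_ ?_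
  · exact (Complex.continuous_exp.comp (continuous_const.mul Complex.continuous_ofReal)).aestronglyMeasurable
  · filter_upwards with τ
    rw [Complex.norm_exp]
    simp [Complex.mul_re]

lemma aux_integral_cexp {w : ℂ} (hw : w.re < 0) :
    ∫ τ in Set.Ioi (0:ℝ), Complex.exp (w * τ) = -1 / w := by
  have hw0 : w ≠ 0 := by intro h; rw [h] at hw; simp at hw
  have hd : ∀ x ∈ Set.Ici (0:ℝ),
      HasDerivAt (fun τ : ℝ => Complex.exp (w * τ) / w) (Complex.exp (w * x)) x := by
    intro x _
    have h1 : HasDerivAt (fun y : ℂ => Complex.exp (w * y) / w) (Complex.exp (w * x)) (x:ℂ) := by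
      have := (((hasDerivAt_id (x:ℂ)).const_mul w).cexp).div_const w
      have e : w * (cexp (w * (x:ℂ)) / w) = cexp (w * (x:ℂ)) := by
        field_simp
      simpa [mul_div_assoc, div_self hw0] using this
    exact h1.comp_ofReal
  have htend : Tendsto (fun τ : ℝ => Complex.exp (w * τ) / w) atTop (𝓝 0) := by
    rw [tendsto_zero_iff_norm_tendsto_zero]
    have h2 : Tendsto (fun τ : ℝ => Real.exp (w.re * τ) / ‖w‖) atTop (𝓝 0) := by
      have h3 : Tendsto (fun τ : ℝ => w.re * τ) atTop atBot :=
        Tendsto.const_mul_atTop_of_neg hw tendsto_id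
      simpa using (Real.tendsto_exp_atBot.comp h3).div_const ‖w‖
    refine h2.congr fun τ => ?_
    simp [norm_div, Complex.norm_exp, Complex.mul_re]
  rw [MeasureTheory.integral_Ioi_of_hasDerivAt_of_tendsto' hd
    (aux_integrableOn_cexp hw) htend]
  simp [neg_div]

lemma aux_summable_nat {b : ℝ} (hb : 0 < b) :
    Summable (fun n : ℕ => Real.exp (-(n:ℝ)^2 * b)) := by
  refine Summable.of_nonneg_of_le (fun n => (Real.exp_pos _).le) (fun n => ?_)
    (summable_geometric_of_lt_one (Real.exp_pos (-b)).le
      (Real.exp_lt_one_iff.mpr (neg_neg_iff_pos.mpr hb)))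
  rw [← Real.exp_nat_mul]
  apply Real.exp_le_exp.mpr
  have h1 : (n:ℝ) ≤ (n:ℝ)^2 := by
    rcases Nat.eq_zero_or_pos n with rfl | hn
    · simp
    · have : (1:ℝ) ≤ (n:ℝ) := by exact_mod_cast hn
      nlinarith
  nlinarith

lemma aux_summable_int {b : ℝ} (hb : 0 < b) :
    Summable (fun n : ℤ => Real.exp (-(n:ℝ)^2 * b)) := by
  refine Summable.of_nat_of_neg ((aux_summable_nat hb).congr fun n => ?_)
    ((aux_summable_nat hb).congr fun n => ?_) <;> push_cast <;> ring_nf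

lemma aux_summable_nat_succ {b : ℝ} (hb : 0 < b) :
    Summable (fun n : ℕ => Real.exp (-((n:ℝ)+1)^2 * b)) := by
  refine ((summable_nat_add_iff 1).mpr (aux_summable_nat hb)).congr fun n => ?_
  push_cast
  ring_nf

lemma aux_poisson (τm : ℝ) (hτm : 0 < τm) (h : ℝ) (hh : h = π / τm) (τ : ℝ) :
    ((∑' k : ℤ, Real.exp (-(τ + 2 * k * τm) ^ 2 / 4) : ℝ) : ℂ) =
      ((Real.sqrt π / τm : ℝ) : ℂ) *
        ∑' n : ℤ, Complex.exp (-(n:ℂ)^2 * (h:ℂ)^2 + Complex.I * n * h * τ) := by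
  have hπ : (0:ℝ) < π := Real.pi_pos
  have hπ0 : (π:ℂ) ≠ 0 := Complex.ofReal_ne_zero.mpr (ne_of_gt hπ)
  have hM0 : (τm:ℂ) ≠ 0 := Complex.ofReal_ne_zero.mpr (ne_of_gt hτm)
  set a : ℝ := τm^2 / π with ha
  set b : ℝ := -(τm * τ) / (2*π) with hb
  have hapos : 0 < a := div_pos (pow_pos hτm 2) hπ
  have haC : 0 < ((a:ℂ)).re := by simpa using hapos
  have key := Complex.tsum_exp_neg_quadratic haC (b:ℂ)
  have hcpow : (1:ℂ) / (a:ℂ)^(1/2:ℂ) = ((Real.sqrt π / τm : ℝ) : ℂ) := by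
    have h1 : ((a:ℂ))^(1/2:ℂ) = ((a ^ (1/2:ℝ) : ℝ) : ℂ) := by
      rw [Complex.ofReal_cpow hapos.le]
      norm_num
    rw [h1, ← Real.sqrt_eq_rpow, ha,
      show τm^2/π = (τm / Real.sqrt π)^2 by rw [div_pow, Real.sq_sqrt hπ.le],
      Real.sqrt_sq (div_nonneg hτm.le (Real.sqrt_nonneg _)),
      one_div, ← Complex.ofReal_inv, inv_div]
  rw [Complex.ofReal_tsum]
  calc ∑' k:ℤ, ((Real.exp (-(τ + 2*(k:ℝ)*τm)^2/4) : ℝ) : ℂ)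
      = ∑' k:ℤ, cexp (-(τ:ℂ)^2/4) * cexp (-(π:ℂ) * a * (k:ℂ)^2 + 2*π*b*(k:ℂ)) := by
        refine tsum_congr fun k => ?_
        rw [← Complex.exp_add, Complex.ofReal_exp]
        congr 1
        simp only [ha, hb]
        push_cast
        field_simp
        ring
    _ = cexp (-(τ:ℂ)^2/4) * ∑' k:ℤ, cexp (-(π:ℂ) * a * (k:ℂ)^2 + 2*π*b*(k:ℂ)) :=
        tsum_mul_left
    _ = cexp (-(τ:ℂ)^2/4) * (1 / (a:ℂ)^(1/2:ℂ) *
          ∑' n:ℤ, cexp (-(π:ℂ)/a * ((n:ℂ) + Complex.I*b)^2)) := by rw [key]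
    _ = cexp (-(τ:ℂ)^2/4) * (1 / (a:ℂ)^(1/2:ℂ) *
          ∑' n:ℤ, cexp ((τ:ℂ)^2/4) *
            cexp (-(n:ℂ)^2 * (h:ℂ)^2 + Complex.I*n*h*τ)) := by
        congr 2
        refine tsum_congr fun n => ?_
        rw [← Complex.exp_add]
        congr 1
        subst hh
        simp only [ha, hb]
        push_cast
        field_simp
        ring_nf
        simp_rw [Complex.I_sq]
        ring
    _ = ((Real.sqrt π / τm : ℝ) : ℂ) *
        ∑' n : ℤ, cexp (-(n:ℂ)^2 * (h:ℂ)^2 + Complex.I*n*h*τ) := by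
        rw [tsum_mul_left, hcpow]
        set S := ∑' n : ℤ, cexp (-(n:ℂ)^2 * (h:ℂ)^2 + Complex.I*n*h*τ)
        set c := ((Real.sqrt π / τm : ℝ) : ℂ)
        rw [show cexp (-(τ:ℂ)^2/4) * (c * (cexp ((τ:ℂ)^2/4) * S)) =
          c * ((cexp (-(τ:ℂ)^2/4) * cexp ((τ:ℂ)^2/4)) * S) from by ring,
          ← Complex.exp_add,
          show -(τ:ℂ)^2/4 + (τ:ℂ)^2/4 = 0 from by ring, Complex.exp_zero, one_mul]

lemma aux_pair (z c : ℂ) (h1 : z - Complex.I*c ≠ 0) (h2 : z + Complex.I*c ≠ 0) :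
    1/(z - Complex.I*c) + 1/(z + Complex.I*c) = 2*z/(c^2+z^2) := by
  have key : (z - Complex.I*c)*(z + Complex.I*c) = c^2 + z^2 := by
    linear_combination -c^2 * Complex.I_sq
  rw [div_add_div _ _ h1 h2, key]
  congr 1
  ring
lemma aux_pair' (z w e : ℂ) (h1 : z - Complex.I*w ≠ 0) (h2 : z + Complex.I*w ≠ 0) :
    e * (1/(z - Complex.I*w)) + e * (1/(z + Complex.I*w)) = 2*z*(e/(w^2+z^2)) := by
  rw [← mul_add, aux_pair z w h1 h2]
  ring

/-- For `τm > 0`, `h = π/τm` and `z : ℂ` with `Re z > 0`,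
`(1/√π)·∫_0^∞ (∑_{k∈ℤ} exp(−(τ + 2kτm)²/4))·exp(−zτ) dτ
  = (h·z/π)·(1/z² + 2·∑_{n=1}^∞ exp(−n²h²)/(n²h² + z²))`,
where the series converges absolutely. -/
theorem erfc_series_identity (τm : ℝ) (hτm : 0 < τm) (h : ℝ) (hh : h = π / τm)
    (z : ℂ) (hz : 0 < z.re) :
    Summable (fun n : ℕ =>
      ‖Complex.exp (-((n : ℂ) + 1) ^ 2 * (h : ℂ) ^ 2) /
        (((n : ℂ) + 1) ^ 2 * (h : ℂ) ^ 2 + z ^ 2)‖) ∧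
    (1 / (Real.sqrt π : ℂ)) *
      ∫ τ in Set.Ioi (0:ℝ),
        ((∑' k : ℤ, Real.exp (-(τ + 2 * k * τm) ^ 2 / 4) : ℝ) : ℂ) *
          Complex.exp (-z * τ) =
      ((h : ℂ) * z / (π : ℂ)) *
        (1 / z ^ 2 +
          2 * ∑' n : ℕ,
            Complex.exp (-((n : ℂ) + 1) ^ 2 * (h : ℂ) ^ 2) /
              (((n : ℂ) + 1) ^ 2 * (h : ℂ) ^ 2 + z ^ 2)) := by
  have hπ : (0:ℝ) < π := Real.pi_pos
  have hπ0 : (π:ℂ) ≠ 0 := Complex.ofReal_ne_zero.mpr hπ.ne'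
  have hM0 : (τm:ℂ) ≠ 0 := Complex.ofReal_ne_zero.mpr hτm.ne'
  have hs0 : Real.sqrt π ≠ 0 := (Real.sqrt_pos.mpr hπ).ne'
  have hs0' : ((Real.sqrt π : ℝ):ℂ) ≠ 0 := Complex.ofReal_ne_zero.mpr hs0
  have hhp : 0 < h := hh ▸ div_pos hπ hτm
  have hz0 : z ≠ 0 := fun H => by simp [H] at hz
  set T : ℕ → ℂ := fun n => Complex.exp (-((n : ℂ) + 1) ^ 2 * (h : ℂ) ^ 2) /
        (((n : ℂ) + 1) ^ 2 * (h : ℂ) ^ 2 + z ^ 2) with hT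
  -- denominators are nonzero
  have hzsub : ∀ c : ℝ, z - Complex.I * c ≠ 0 := by
    intro c H
    have h1 : (z - Complex.I * c).re = z.re := by simp
    rw [H] at h1
    simp at h1
    rw [← h1] at hz
    exact lt_irrefl _ hz
  have hzadd : ∀ c : ℝ, z + Complex.I * c ≠ 0 := by
    intro c H
    have h1 : (z + Complex.I * c).re = z.re := by simp
    rw [H] at h1
    simp at h1
    rw [← h1] at hz
    exact lt_irrefl _ hz
  have hden_ne : ∀ n : ℕ, (((n:ℂ)+1)^2*(h:ℂ)^2 + z^2) ≠ 0 := by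
    intro n
    have key : (z - Complex.I*((((n:ℝ)+1)*h : ℝ):ℂ))*(z + Complex.I*((((n:ℝ)+1)*h : ℝ):ℂ))
        = ((n:ℂ)+1)^2*(h:ℂ)^2 + z^2 := by
      push_cast
      linear_combination (-(((n:ℂ)+1)*(h:ℂ))^2) * Complex.I_sq
    rw [← key]
    exact mul_ne_zero (hzsub _) (hzadd _)
  -- norms of T
  have hTnorm : ∀ n : ℕ, ‖T n‖ =
      Real.exp (-((n:ℝ)+1)^2*h^2) / ‖(((n:ℂ)+1)^2*(h:ℂ)^2 + z^2)‖ := by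
    intro n
    simp only [hT]
    rw [show -((n:ℂ)+1)^2*(h:ℂ)^2 = ((-((n:ℝ)+1)^2*h^2 : ℝ) : ℂ) from by push_cast; ring]
    rw [norm_div, Complex.norm_exp, Complex.ofReal_re]
  -- summability of norms of T (first conjunct)
  have hsum1 : Summable (fun n : ℕ => ‖T n‖) := by
    have htend : Tendsto (fun n : ℕ => ((n:ℝ)+1)^2*h^2 + (z^2).re) atTop atTop := by
      have t0 : Tendsto (fun n:ℕ => (n:ℝ)) atTop atTop := tendsto_natCast_atTop_atTop
      have t1 := tendsto_atTop_add_const_right atTop ((z^2).re)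
        (t0.atTop_mul_const (pow_pos hhp 2))
      refine tendsto_atTop_mono (fun n => ?_) t1
      have h1 : (n:ℝ) ≤ ((n:ℝ)+1)^2 := by nlinarith [Nat.cast_nonneg (α:=ℝ) n]
      nlinarith [pow_pos hhp 2]
    refine Summable.of_norm_bounded_eventually (aux_summable_nat_succ (pow_pos hhp 2)) ?_
    rw [Nat.cofinite_eq_atTop]
    filter_upwards [htend.eventually_ge_atTop 1] with n hn
    rw [norm_norm, hTnorm n]
    have hre : (((n:ℂ)+1)^2*(h:ℂ)^2 + z^2).re = ((n:ℝ)+1)^2*h^2 + (z^2).re := by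
      rw [show ((n:ℂ)+1)^2*(h:ℂ)^2 = ((((n:ℝ)+1)^2*h^2 : ℝ):ℂ) from by push_cast; ring,
        Complex.add_re, Complex.ofReal_re]
    have hge : (1:ℝ) ≤ ‖(((n:ℂ)+1)^2*(h:ℂ)^2 + z^2)‖ := by
      refine le_trans hn ?_
      rw [← hre]
      exact Complex.re_le_norm _
    exact div_le_self (Real.exp_pos _).le hge
  refine ⟨hsum1, ?_⟩
  -- the functions F n
  set c0 : ℝ := Real.sqrt π / τm with hc0
  have hc0pos : 0 < c0 := div_pos (Real.sqrt_pos.mpr hπ) hτm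
  set F : ℤ → ℝ → ℂ := fun n τ => (c0:ℂ) * Complex.exp ((-(n:ℝ)^2*h^2 : ℝ):ℂ) *
    Complex.exp ((Complex.I*(n:ℂ)*(h:ℂ) - z)*(τ:ℂ)) with hF
  have hwre : ∀ n : ℤ, (Complex.I*(n:ℂ)*(h:ℂ) - z).re = -z.re := by
    intro n
    simp [Complex.sub_re, Complex.mul_re, Complex.mul_im]
  have hint : ∀ τ : ℝ, ((∑' k : ℤ, Real.exp (-(τ + 2 * k * τm) ^ 2 / 4) : ℝ) : ℂ) *
      Complex.exp (-z * τ) = ∑' n : ℤ, F n τ := by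
    intro τ
    rw [aux_poisson τm hτm h hh τ]
    rw [mul_assoc, ← tsum_mul_right, ← tsum_mul_left]
    refine tsum_congr fun n => ?_
    simp only [hF, hc0]
    rw [mul_assoc ((Real.sqrt π / τm : ℝ):ℂ), ← Complex.exp_add, ← Complex.exp_add]
    congr 2
    push_cast
    try ring
  have hFint : ∀ n : ℤ, IntegrableOn (F n) (Set.Ioi (0:ℝ)) := by
    intro n
    refine (aux_integrableOn_cexp (w := Complex.I*(n:ℂ)*(h:ℂ) - z) ?_).const_mul _
    rw [hwre n]; linarith
  have hFIval : ∀ n : ℤ, (∫ τ in Set.Ioi (0:ℝ), F n τ) =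
      (c0:ℂ) * (Complex.exp ((-(n:ℝ)^2*h^2 : ℝ):ℂ) * (1 / (z - Complex.I*(n:ℂ)*(h:ℂ)))) := by
    intro n
    simp only [hF, mul_assoc]
    rw [integral_const_mul, integral_const_mul,
      aux_integral_cexp (w := Complex.I*((n:ℂ)*(h:ℂ)) - z)
        (by have := hwre n; rw [mul_assoc] at this; rw [this]; linarith),
      show Complex.I*((n:ℂ)*(h:ℂ)) - z = -(z - Complex.I*((n:ℂ)*(h:ℂ))) from by ring,
      div_neg, neg_div, neg_neg]
  have hFnorm : ∀ n : ℤ, (∫ τ in Set.Ioi (0:ℝ), ‖F n τ‖) =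
      (c0 * Real.exp (-(n:ℝ)^2*h^2)) * ∫ τ in Set.Ioi (0:ℝ), Real.exp (-z.re * τ) := by
    intro n
    rw [← integral_const_mul]
    refine MeasureTheory.integral_congr_ae (Filter.Eventually.of_forall fun τ => ?_)
    simp only [hF]
    have hn1 : ‖Complex.exp ((-(n:ℝ)^2*h^2 : ℝ):ℂ)‖ = Real.exp (-(n:ℝ)^2*h^2) := by
      rw [Complex.norm_exp, Complex.ofReal_re]
    have hn2 : ‖Complex.exp ((Complex.I*(n:ℂ)*(h:ℂ) - z)*(τ:ℂ))‖ = Real.exp (-z.re * τ) := by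
      rw [Complex.norm_exp, Complex.mul_re, hwre n]
      simp
    rw [norm_mul, norm_mul, hn1, hn2, Complex.norm_real, Real.norm_eq_abs, abs_of_pos hc0pos]
    try ring
  have hnormsum : Summable (fun n : ℤ => ∫ τ in Set.Ioi (0:ℝ), ‖F n τ‖) := by
    refine Summable.congr ?_ (fun n => (hFnorm n).symm)
    exact ((aux_summable_int (pow_pos hhp 2)).mul_left c0).mul_right _
  have hswap := MeasureTheory.integral_tsum_of_summable_integral_norm hFint hnormsum
  -- the sum g
  set g : ℤ → ℂ := fun n => Complex.exp ((-(n:ℝ)^2*h^2 : ℝ):ℂ) *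
    (1 / (z - Complex.I*(n:ℂ)*(h:ℂ))) with hg
  have hgsum : Summable g := by
    refine Summable.of_norm_bounded
      ((aux_summable_int (pow_pos hhp 2)).mul_right (z.re)⁻¹) (fun n => ?_)
    simp only [hg]
    rw [norm_mul, Complex.norm_exp, Complex.ofReal_re]
    refine mul_le_mul_of_nonneg_left ?_ (Real.exp_pos _).le
    rw [one_div, norm_inv]
    refine inv_anti₀ hz ?_
    have h1 : (z - Complex.I*(n:ℂ)*(h:ℂ)).re = z.re := by simp
    rw [← h1]
    exact Complex.re_le_norm _
  have hgnat : Summable (fun n : ℕ => g n) :=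
    hgsum.comp_injective (fun a b hab => by exact_mod_cast hab)
  have hgneg : Summable (fun n : ℕ => g (-((n:ℤ)+1))) :=
    hgsum.comp_injective (fun a b hab => by simpa using hab)
  have hgsucc : Summable (fun n : ℕ => g ((n:ℤ)+1)) :=
    hgsum.comp_injective (fun a b hab => by simpa using hab)
  have hg0 : g 0 = 1/z := by simp [hg]
  have hpair : ∀ n : ℕ, g ((n:ℤ)+1) + g (-((n:ℤ)+1)) = 2*z*T n := by
    intro n
    have e1 : ((((n:ℤ)+1 : ℤ)):ℂ) = (n:ℂ)+1 := by push_cast; try ring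
    have e2 : (((-((n:ℤ)+1) : ℤ)):ℂ) = -((n:ℂ)+1) := by push_cast; try ring
    have e3 : ((-((((n:ℤ)+1 : ℤ)):ℝ)^2*h^2 : ℝ):ℂ) = -((n:ℂ)+1)^2*(h:ℂ)^2 := by
      push_cast; try ring
    have e4 : ((-(((-((n:ℤ)+1) : ℤ)):ℝ)^2*h^2 : ℝ):ℂ) = -((n:ℂ)+1)^2*(h:ℂ)^2 := by
      push_cast; try ring
    have h1 : z - Complex.I*(((n:ℂ)+1)*(h:ℂ)) ≠ 0 := by
      have := hzsub (((n:ℝ)+1)*h)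
      push_cast at this
      convert this using 2
      try ring
    have h2 : z + Complex.I*(((n:ℂ)+1)*(h:ℂ)) ≠ 0 := by
      have := hzadd (((n:ℝ)+1)*h)
      push_cast at this
      convert this using 2
      try ring
    simp only [hg, hT, e1, e2, e3, e4]
    rw [show Complex.I*(-((n:ℂ)+1))*(h:ℂ) = -(Complex.I*(((n:ℂ)+1)*(h:ℂ))) from by ring,
      sub_neg_eq_add,
      show Complex.I*((n:ℂ)+1)*(h:ℂ) = Complex.I*(((n:ℂ)+1)*(h:ℂ)) from by ring,
      aux_pair' z _ _ h1 h2, mul_pow]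
  have hsplit : ∑' n : ℤ, g n = 1/z + 2*z*∑' n : ℕ, T n := by
    rw [tsum_of_nat_of_neg_add_one hgnat hgneg, hgnat.tsum_eq_zero_add]
    have h00 : g ((0:ℕ):ℤ) = 1/z := by rw [Nat.cast_zero]; exact hg0
    rw [h00, add_assoc]
    congr 1
    have hsucc' : Summable (fun b : ℕ => g ((((b+1):ℕ)):ℤ)) := by
      refine hgsucc.congr fun b => ?_
      norm_cast
    rw [← hsucc'.tsum_add hgneg, ← tsum_mul_left]
    refine tsum_congr fun n => ?_
    rw [← hpair n]
    norm_cast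
  -- final assembly
  calc (1 / (Real.sqrt π : ℂ)) *
      ∫ τ in Set.Ioi (0:ℝ),
        ((∑' k : ℤ, Real.exp (-(τ + 2 * k * τm) ^ 2 / 4) : ℝ) : ℂ) *
          Complex.exp (-z * τ)
      = (1 / (Real.sqrt π : ℂ)) * ∑' n : ℤ, ∫ τ in Set.Ioi (0:ℝ), F n τ := by
        congr 1
        rw [MeasureTheory.integral_congr_ae (Filter.Eventually.of_forall fun τ => hint τ),
          ← hswap]
    _ = (1 / (Real.sqrt π : ℂ)) * ((c0:ℂ) * ∑' n : ℤ, g n) := by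
        have e : ∀ n : ℤ, (∫ τ in Set.Ioi (0:ℝ), F n τ) = (c0:ℂ) * g n := by
          intro n
          rw [hFIval n]
          try simp only [hg]
        rw [tsum_congr e, tsum_mul_left]
    _ = (1 / (Real.sqrt π : ℂ)) * ((c0:ℂ) * (1/z + 2*z*∑' n : ℕ, T n)) := by rw [hsplit]
    _ = ((h : ℂ) * z / (π : ℂ)) * (1 / z ^ 2 + 2 * ∑' n : ℕ, T n) := by
        rw [hc0, hh]
        push_cast
        have hsq : ((Real.sqrt π : ℝ):ℂ) * ((Real.sqrt π : ℝ):ℂ) = (π:ℂ) := by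
          rw [← Complex.ofReal_mul, Real.mul_self_sqrt hπ.le]
        field_simp
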